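/- Let m = b²(2c² + 2a² − b²)/Δ, where Δ = (a+b+c)(b+c−a)(c+a−b)(a+b−c). Then (dist bB bC)² = m·a², (dist bC bA)² = m·b², and (dist bA bB)² = m·c²; hence triangle bA bB bC is similar to triangle ABC. -/

import Mathlib

open EuclideanGeometry RealInnerProductSpace

private lemma ip2 (x y : EuclideanSpace ℝ (Fin 2)) :
    ⟪x, y⟫ = x 0 * y 0 + x 1 * y 1 := by
  simp [PiLp.inner_apply, Fin.sum_univ_two, RCLike.inner_apply]; ring

private lemma ds2 (x y : EuclideanSpace ℝ (Fin 2)) :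
    dist x y ^ 2 = ⟪x - y, x - y⟫ := by
  rw [dist_eq_norm]; exact (real_inner_self_eq_norm_sq _).symm

private lemma key_gram (d u v : EuclideanSpace ℝ (Fin 2)) :
    ⟪d, d⟫ * (⟪u, u⟫ * ⟪v, v⟫ - ⟪u, v⟫ ^ 2)
      = ⟪v, v⟫ * ⟪d, u⟫ ^ 2 - 2 * ⟪u, v⟫ * ⟪d, u⟫ * ⟪d, v⟫ + ⟪u, u⟫ * ⟪d, v⟫ ^ 2 := by
  simp only [ip2, PiLp.sub_apply]
  ring

private lemma ipos (x : EuclideanSpace ℝ (Fin 2)) (h : x ≠ 0) : 0 < ⟪x, x⟫ :=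
  lt_of_le_of_ne real_inner_self_nonneg (fun hh => h (inner_self_eq_zero.mp hh.symm))

set_option maxHeartbeats 2000000 in
theorem triangle_bA_bB_bC_similar
    (A B C O bA bB bC : EuclideanSpace ℝ (Fin 2))
    (hABC : AffineIndependent ℝ ![A, B, C])
    (a b c : ℝ) (ha : a = dist B C) (hb : b = dist C A) (hc : c = dist A B)
    (hO : O = (⟨![A, B, C], hABC⟩ : Affine.Triangle ℝ (EuclideanSpace ℝ (Fin 2))).circumcenter)
    (hbB : bB = EuclideanGeometry.reflection (affineSpan ℝ {C, A}) O)
    (hbA1 : dist bA B = dist bA A) (hbA2 : ⟪bA - A, C - A⟫ = 0)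
    (hbC1 : dist bC B = dist bC C) (hbC2 : ⟪bC - C, A - C⟫ = 0)
    (m : ℝ)
    (hm : m = b^2 * (2*c^2 + 2*a^2 - b^2) / ((a+b+c)*(b+c-a)*(c+a-b)*(a+b-c))) :
    ((dist bB bC)^2 = m * a^2 ∧ (dist bC bA)^2 = m * b^2 ∧ (dist bA bB)^2 = m * c^2) ∧
    ∃ r : ℝ, 0 < r ∧ dist bB bC = r * dist B C ∧ dist bC bA = r * dist C A ∧
      dist bA bB = r * dist A B := by
  have hinj := hABC.injective
  have hAB : A ≠ B := by
    have := hinj.ne (show (0:Fin 3) ≠ 1 by decide); simpa using this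
  have hCA : C ≠ A := by
    have := hinj.ne (show (2:Fin 3) ≠ 0 by decide); simpa using this
  have hBC : B ≠ C := by
    have := hinj.ne (show (1:Fin 3) ≠ 2 by decide); simpa using this
  have hncol : ¬ Collinear ℝ ({A, B, C} : Set (EuclideanSpace ℝ (Fin 2))) :=
    affineIndependent_iff_not_collinear_set.mp hABC
  have hcol_of : ∀ t : ℝ, C - A = t • (B - A) → False := by
    intro t ht
    apply hncol
    apply (collinear_iff_of_mem (Set.mem_insert A _)).mpr
    refine ⟨B - A, ?_⟩
    intro p hp
    simp only [Set.mem_insert_iff, Set.mem_singleton_iff] at hp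
    rcases hp with rfl | rfl | rfl
    · exact ⟨0, by simp⟩
    · exact ⟨1, by simp [vadd_eq_add]⟩
    · exact ⟨t, by rw [vadd_eq_add, ← ht]; abel⟩
  have hapos : 0 < a := ha ▸ dist_pos.mpr hBC
  have hbpos : 0 < b := hb ▸ dist_pos.mpr hCA
  have hcpos : 0 < c := hc ▸ dist_pos.mpr hAB
  have hE : (0:ℝ) < ⟪B - A, B - A⟫ := ipos _ (sub_ne_zero_of_ne hAB.symm)
  have hF : (0:ℝ) < ⟪C - A, C - A⟫ := ipos _ (sub_ne_zero_of_ne hCA)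
  -- squared side lengths
  have ha2 : a^2 = ⟪B - A, B - A⟫ + ⟪C - A, C - A⟫ - 2 * ⟪B - A, C - A⟫ := by
    rw [ha, ds2]; simp only [ip2, PiLp.sub_apply]; ring
  have hb2 : b^2 = ⟪C - A, C - A⟫ := by
    rw [hb, ds2]
  have hc2 : c^2 = ⟪B - A, B - A⟫ := by
    rw [hc, ds2]; simp only [ip2, PiLp.sub_apply]; ring
  -- convert dist equalities to inner equalities
  have sq_of : ∀ {x y z w : EuclideanSpace ℝ (Fin 2)}, dist x y = dist z w →
      ⟪x - y, x - y⟫ = ⟪z - w, z - w⟫ := by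
    intro x y z w h; rw [← ds2, ← ds2, h]
  -- facts about bA
  have f1 : ⟪bA - A, B - A⟫ = ⟪B - A, B - A⟫ / 2 := by
    have h := sq_of hbA1
    simp only [ip2, PiLp.sub_apply] at h ⊢
    linear_combination -h/2
  have f2 : ⟪bA - A, C - A⟫ = 0 := hbA2
  -- facts about bC
  have f4 : ⟪bC - A, C - A⟫ = ⟪C - A, C - A⟫ := by
    have h := hbC2
    simp only [ip2, PiLp.sub_apply] at h ⊢
    linear_combination -h
  have f3 : ⟪bC - A, B - A⟫ = (⟪B - A, B - A⟫ + ⟪C - A, C - A⟫) / 2 := by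
    have h := sq_of hbC1
    have h2 := hbC2
    simp only [ip2, PiLp.sub_apply] at h h2 ⊢
    linear_combination -h/2 - h2
  -- circumcenter facts
  have hd := fun i => Affine.Simplex.dist_circumcenter_eq_circumradius
    (⟨![A, B, C], hABC⟩ : Affine.Triangle ℝ (EuclideanSpace ℝ (Fin 2))) i
  have hd0 := hd 0
  have hd1 := hd 1
  have hd2 := hd 2
  simp only [show (⟨![A, B, C], hABC⟩ : Affine.Triangle ℝ (EuclideanSpace ℝ (Fin 2))).points
      = ![A, B, C] from rfl, Matrix.cons_val_zero, Matrix.cons_val_one, Matrix.head_cons,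
      Matrix.cons_val_two, Matrix.tail_cons, ← hO] at hd0 hd1 hd2
  have fO1 : ⟪O - A, B - A⟫ = ⟪B - A, B - A⟫ / 2 := by
    have h := sq_of (hd0.trans hd1.symm)
    simp only [ip2, PiLp.sub_apply] at h ⊢
    linear_combination h/2
  have fO2 : ⟪O - A, C - A⟫ = ⟪C - A, C - A⟫ / 2 := by
    have h := sq_of (hd0.trans hd2.symm)
    simp only [ip2, PiLp.sub_apply] at h ⊢
    linear_combination h/2
  -- the reflection bB
  have hPm : (orthogonalProjection (affineSpan ℝ {C, A}) O : EuclideanSpace ℝ (Fin 2))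
      ∈ affineSpan ℝ ({C, A} : Set (EuclideanSpace ℝ (Fin 2))) :=
    (orthogonalProjection (affineSpan ℝ {C, A}) O).2
  have hPm' : ((orthogonalProjection (affineSpan ℝ {C, A}) O : EuclideanSpace ℝ (Fin 2)) - C) +ᵥ C
      ∈ line[ℝ, C, A] := by
    simp only [vadd_eq_add, sub_add_cancel]
    exact hPm
  obtain ⟨r, hr0⟩ := vadd_left_mem_affineSpan_pair.mp hPm'
  simp only [vsub_eq_sub] at hr0
  have hr : r • (A - C) + C
      = (orthogonalProjection (affineSpan ℝ {C, A}) O : EuclideanSpace ℝ (Fin 2)) := by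
    rw [hr0]; abel
  have hperp := vsub_orthogonalProjection_mem_direction_orthogonal (affineSpan ℝ {C, A}) O
  have hdir : (A - C) ∈ (affineSpan ℝ ({C, A} : Set (EuclideanSpace ℝ (Fin 2)))).direction := by
    have := AffineSubspace.vsub_mem_direction (right_mem_affineSpan_pair ℝ C A)
      (left_mem_affineSpan_pair ℝ C A)
    simpa [vsub_eq_sub] using this
  have h0 : ⟪A - C, O - (orthogonalProjection (affineSpan ℝ {C, A}) O : EuclideanSpace ℝ (Fin 2))⟫
      = 0 := by
    have := (Submodule.mem_orthogonal _ _).mp hperp (A - C) hdir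
    simpa [vsub_eq_sub] using this
  rw [← hr] at h0
  have hrF : (r - 1/2) * ⟪C - A, C - A⟫ = 0 := by
    have h2 := fO2
    simp only [ip2, PiLp.sub_apply, PiLp.add_apply, PiLp.smul_apply, smul_eq_mul] at h0 h2 ⊢
    linear_combination -h0 - h2
  have hr2 : r = 1/2 := by
    rcases mul_eq_zero.mp hrF with h | h
    · linarith
    · exact absurd h hF.ne'
  have hbB' : bB = (r • (A - C) + C) - O + (r • (A - C) + C) := by
    rw [hbB, EuclideanGeometry.reflection_apply', ← hr]
    simp [vsub_eq_sub, vadd_eq_add]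
  rw [hr2] at hbB'
  have f5 : ⟪bB - A, B - A⟫ = ⟪B - A, C - A⟫ - ⟪B - A, B - A⟫ / 2 := by
    rw [hbB']
    have h := fO1
    simp only [ip2, PiLp.sub_apply, PiLp.add_apply, PiLp.smul_apply, smul_eq_mul] at h ⊢
    linear_combination -h
  have f6 : ⟪bB - A, C - A⟫ = ⟪C - A, C - A⟫ / 2 := by
    rw [hbB']
    have h := fO2
    simp only [ip2, PiLp.sub_apply, PiLp.add_apply, PiLp.smul_apply, smul_eq_mul] at h ⊢
    linear_combination -h
  -- positivity of the Gram determinant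
  have hDnn : 0 ≤ ⟪B - A, B - A⟫ * ⟪C - A, C - A⟫ - ⟪B - A, C - A⟫ ^ 2 := by
    have hw : ⟪⟪B - A, B - A⟫ • (C - A) - ⟪B - A, C - A⟫ • (B - A),
        ⟪B - A, B - A⟫ • (C - A) - ⟪B - A, C - A⟫ • (B - A)⟫
        = ⟪B - A, B - A⟫ * (⟪B - A, B - A⟫ * ⟪C - A, C - A⟫ - ⟪B - A, C - A⟫ ^ 2) := by
      simp only [ip2, PiLp.sub_apply, PiLp.smul_apply, smul_eq_mul]
      ring
    have hnn := real_inner_self_nonneg (x := ⟪B - A, B - A⟫ • (C - A) - ⟪B - A, C - A⟫ • (B - A))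
    rw [hw] at hnn
    exact (mul_nonneg_iff_of_pos_left hE).mp hnn
  have hD : 0 < ⟪B - A, B - A⟫ * ⟪C - A, C - A⟫ - ⟪B - A, C - A⟫ ^ 2 := by
    rcases hDnn.lt_or_eq with h | h
    · exact h
    · exfalso
      have hw : ⟪⟪B - A, B - A⟫ • (C - A) - ⟪B - A, C - A⟫ • (B - A),
          ⟪B - A, B - A⟫ • (C - A) - ⟪B - A, C - A⟫ • (B - A)⟫
          = ⟪B - A, B - A⟫ * (⟪B - A, B - A⟫ * ⟪C - A, C - A⟫ - ⟪B - A, C - A⟫ ^ 2) := by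
        simp only [ip2, PiLp.sub_apply, PiLp.smul_apply, smul_eq_mul]
        ring
      rw [← h, mul_zero] at hw
      have hw0 := inner_self_eq_zero.mp hw
      have hEv : ⟪B - A, B - A⟫ • (C - A) = ⟪B - A, C - A⟫ • (B - A) := by
        have := sub_eq_zero.mp hw0; exact this
      apply hcol_of (⟪B - A, B - A⟫⁻¹ * ⟪B - A, C - A⟫)
      calc C - A = ⟪B - A, B - A⟫⁻¹ • (⟪B - A, B - A⟫ • (C - A)) := by
              rw [smul_smul, inv_mul_cancel₀ hE.ne', one_smul]
        _ = ⟪B - A, B - A⟫⁻¹ • (⟪B - A, C - A⟫ • (B - A)) := by rw [hEv]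
        _ = (⟪B - A, B - A⟫⁻¹ * ⟪B - A, C - A⟫) • (B - A) := by rw [smul_smul]
  -- positivity of 4E + F - 4G
  have h4 : 0 < 4 * ⟪B - A, B - A⟫ + ⟪C - A, C - A⟫ - 4 * ⟪B - A, C - A⟫ := by
    have hne : (2:ℝ) • (B - A) - (C - A) ≠ 0 := by
      intro h
      exact hcol_of 2 (sub_eq_zero.mp h).symm
    have := ipos _ hne
    have hw : ⟪(2:ℝ) • (B - A) - (C - A), (2:ℝ) • (B - A) - (C - A)⟫
        = 4 * ⟪B - A, B - A⟫ + ⟪C - A, C - A⟫ - 4 * ⟪B - A, C - A⟫ := by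
      simp only [ip2, PiLp.sub_apply, PiLp.smul_apply, smul_eq_mul]
      ring
    linarith [hw ▸ this]
  -- Delta in terms of the Gram determinant
  have hΔ : (a+b+c)*(b+c-a)*(c+a-b)*(a+b-c)
      = 4 * (⟪B - A, B - A⟫ * ⟪C - A, C - A⟫ - ⟪B - A, C - A⟫ ^ 2) := by
    linear_combination
      (2*b^2 + 2*c^2 - a^2 - (⟪B - A, B - A⟫ + ⟪C - A, C - A⟫ - 2*⟪B - A, C - A⟫)) * ha2
      + (2*(⟪B - A, B - A⟫ + ⟪C - A, C - A⟫ - 2*⟪B - A, C - A⟫) + 2*c^2 - b^2 - ⟪C - A, C - A⟫) * hb2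
      + (2*(⟪B - A, B - A⟫ + ⟪C - A, C - A⟫ - 2*⟪B - A, C - A⟫) + 2*⟪C - A, C - A⟫ - c^2 - ⟪B - A, B - A⟫) * hc2
  have hΔne : (a+b+c)*(b+c-a)*(c+a-b)*(a+b-c) ≠ 0 := by rw [hΔ]; linarith
  -- inner products of the difference vectors
  have e1u : ⟪bB - bC, B - A⟫ = ⟪B - A, C - A⟫ - ⟪B - A, B - A⟫ - ⟪C - A, C - A⟫/2 := by
    rw [show bB - bC = (bB - A) - (bC - A) from (sub_sub_sub_cancel_right bB bC A).symm,
      inner_sub_left, f5, f3]; ring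
  have e1v : ⟪bB - bC, C - A⟫ = -⟪C - A, C - A⟫/2 := by
    rw [show bB - bC = (bB - A) - (bC - A) from (sub_sub_sub_cancel_right bB bC A).symm,
      inner_sub_left, f6, f4]; ring
  have e2u : ⟪bC - bA, B - A⟫ = ⟪C - A, C - A⟫/2 := by
    rw [show bC - bA = (bC - A) - (bA - A) from (sub_sub_sub_cancel_right bC bA A).symm,
      inner_sub_left, f3, f1]; ring
  have e2v : ⟪bC - bA, C - A⟫ = ⟪C - A, C - A⟫ := by
    rw [show bC - bA = (bC - A) - (bA - A) from (sub_sub_sub_cancel_right bC bA A).symm,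
      inner_sub_left, f4, f2]; ring
  have e3u : ⟪bA - bB, B - A⟫ = ⟪B - A, B - A⟫ - ⟪B - A, C - A⟫ := by
    rw [show bA - bB = (bA - A) - (bB - A) from (sub_sub_sub_cancel_right bA bB A).symm,
      inner_sub_left, f1, f5]; ring
  have e3v : ⟪bA - bB, C - A⟫ = -⟪C - A, C - A⟫/2 := by
    rw [show bA - bB = (bA - A) - (bB - A) from (sub_sub_sub_cancel_right bA bB A).symm,
      inner_sub_left, f2, f6]; ring
  -- squared distances
  have k1 := key_gram (bB - bC) (B - A) (C - A)
  rw [e1u, e1v, ← ds2] at k1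
  have k2 := key_gram (bC - bA) (B - A) (C - A)
  rw [e2u, e2v, ← ds2] at k2
  have k3 := key_gram (bA - bB) (B - A) (C - A)
  rw [e3u, e3v, ← ds2] at k3
  have g1 : (dist bB bC)^2 = m * a^2 := by
    rw [hm, hΔ, ha2, hb2, hc2, div_mul_eq_mul_div, eq_div_iff (by linarith)]
    linear_combination 4 * k1
  have g2 : (dist bC bA)^2 = m * b^2 := by
    rw [hm, hΔ, ha2, hb2, hc2, div_mul_eq_mul_div, eq_div_iff (by linarith)]
    linear_combination 4 * k2
  have g3 : (dist bA bB)^2 = m * c^2 := by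
    rw [hm, hΔ, ha2, hb2, hc2, div_mul_eq_mul_div, eq_div_iff (by linarith)]
    linear_combination 4 * k3
  have hnum : b^2 * (2*c^2 + 2*a^2 - b^2)
      = ⟪C - A, C - A⟫ * (4*⟪B - A, B - A⟫ + ⟪C - A, C - A⟫ - 4*⟪B - A, C - A⟫) := by
    rw [hb2, hc2, ha2]; ring
  have hmpos : 0 < m := by
    rw [hm, hnum, hΔ]
    exact div_pos (mul_pos hF h4) (by linarith)
  refine ⟨⟨g1, g2, g3⟩, Real.sqrt m, Real.sqrt_pos.mpr hmpos, ?_, ?_, ?_⟩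
  · rw [← ha, show dist bB bC = Real.sqrt ((dist bB bC)^2) from (Real.sqrt_sq dist_nonneg).symm,
      g1, Real.sqrt_mul hmpos.le, Real.sqrt_sq hapos.le]
  · rw [← hb, show dist bC bA = Real.sqrt ((dist bC bA)^2) from (Real.sqrt_sq dist_nonneg).symm,
      g2, Real.sqrt_mul hmpos.le, Real.sqrt_sq hbpos.le]
  · rw [← hc, show dist bA bB = Real.sqrt ((dist bA bB)^2) from (Real.sqrt_sq dist_nonneg).symm,
      g3, Real.sqrt_mul hmpos.le, Real.sqrt_sq hcpos.le]
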